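/- With the same hypotheses as the cone contraction statement (orthogonal splitting ℝ^d = ⊕ E^i, A preserving each E^i with norms and co-norms of A|_{E^i} in (e^{λ'_i − δ/4}, e^{λ'_i + δ/4}), δ < κ/2 where κ = (1/2)min_i(λ'_i−λ'_{i+1})), define the dual cone K_{j,γ} := {v : ‖∑_{i≤j} v^i‖ < γ·‖∑_{i≥j+1} v^i‖}. Then A⁻¹(K_{j,γ}) ⊂ K_{j, γ·e^{−κ+δ/4}} for every j ∈ {1,...,k−1} and every γ > 0. -/

import Mathlib

noncomputable section

abbrev Euc (d : ℕ) := EuclideanSpace ℝ (Fin d)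

noncomputable def projS {d : ℕ} (V : Submodule ℝ (Euc d)) : Euc d →L[ℝ] Euc d :=
  V.subtypeL ∘L V.orthogonalProjection

def Vlow {d k : ℕ} (E : Fin k → Submodule ℝ (Euc d)) (j : ℕ) : Submodule ℝ (Euc d) :=
  ⨆ (i : Fin k) (_ : (i : ℕ) < j), E i

/-- The dual cone `K_{j,γ} = {v : ‖∑_{i≤j} v^i‖ < γ ‖∑_{i≥j+1} v^i‖}`. -/
def coneL {d k : ℕ} (E : Fin k → Submodule ℝ (Euc d)) (j : ℕ) (γ : ℝ) : Set (Euc d) :=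
  {v | ‖projS (Vlow E j) v‖ < γ * ‖v - projS (Vlow E j) v‖}

lemma pyth_aux {d n : ℕ} (f : Fin n → Euc d)
    (h : ∀ i j : Fin n, i ≠ j → (inner ℝ (f i) (f j) : ℝ) = 0) :
    ‖∑ i, f i‖ ^ 2 = ∑ i, ‖f i‖ ^ 2 := by
  have key : (inner ℝ (∑ i, f i) (∑ i, f i) : ℝ) = ∑ i, (inner ℝ (f i) (f i) : ℝ) := by
    rw [sum_inner]
    refine Finset.sum_congr rfl fun i _ => ?_
    rw [inner_sum, Finset.sum_eq_single i]
    · exact fun b _ hb => h i b (Ne.symm hb)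
    · simp
  rw [← real_inner_self_eq_norm_sq, key]
  exact Finset.sum_congr rfl fun i _ => real_inner_self_eq_norm_sq (f i)

lemma decomp_aux {d k : ℕ} (E : Fin k → Submodule ℝ (Euc d)) (p : Fin k → Prop) [DecidablePred p]
    {v : Euc d} (hv : v ∈ ⨆ i, ⨆ (_ : p i), E i) :
    ∃ f : Fin k → Euc d, (∀ i, f i ∈ E i) ∧ (∀ i, ¬ p i → f i = 0) ∧ ∑ i, f i = v := by
  have hE : (⨆ i, ⨆ (_ : p i), E i) = ⨆ i, (if p i then E i else ⊥) := by
    congr 1; funext i; split_ifs with h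
    · exact iSup_pos h
    · exact iSup_neg h
  rw [hE, Submodule.mem_iSup_iff_exists_finsupp] at hv
  obtain ⟨f, hf, hsum⟩ := hv
  have hz : ∀ i, ¬ p i → f i = 0 := by
    intro i hi
    have := hf i
    rw [if_neg hi] at this
    simpa using this
  refine ⟨f, fun i => ?_, hz, ?_⟩
  · have := hf i
    by_cases h : p i
    · rwa [if_pos h] at this
    · rw [hz i h]; exact (E i).zero_mem
  · rw [← hsum, Finsupp.sum_fintype]
    intro i; rfl

lemma norm_upper_aux {d k : ℕ} (E : Fin k → Submodule ℝ (Euc d))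
    (horth : ∀ i j : Fin k, i ≠ j → ∀ v ∈ E i, ∀ w ∈ E j, (inner ℝ v w : ℝ) = 0)
    (A : Euc d ≃L[ℝ] Euc d)
    (hApres : ∀ i : Fin k, ⇑A '' (E i : Set (Euc d)) = (E i : Set (Euc d)))
    (p : Fin k → Prop) [DecidablePred p] (c : ℝ) (hc0 : 0 ≤ c)
    (hc : ∀ i, p i → ∀ w ∈ E i, w ≠ 0 → ‖A w‖ ≤ c * ‖w‖)
    {v : Euc d} (hv : v ∈ ⨆ i, ⨆ (_ : p i), E i) : ‖A v‖ ≤ c * ‖v‖ := by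
  obtain ⟨f, hfE, hfz, rfl⟩ := decomp_aux E p hv
  have hAf : ∀ i, A (f i) ∈ E i := fun i => by
    have : A (f i) ∈ ⇑A '' (E i : Set (Euc d)) := ⟨f i, hfE i, rfl⟩
    rwa [hApres i] at this
  have h1 : ‖∑ i, f i‖ ^ 2 = ∑ i, ‖f i‖ ^ 2 :=
    pyth_aux f (fun i j hij => horth i j hij _ (hfE i) _ (hfE j))
  have hAsum : A (∑ i, f i) = ∑ i, A (f i) := map_sum A f Finset.univ
  have h2 : ‖A (∑ i, f i)‖ ^ 2 = ∑ i, ‖A (f i)‖ ^ 2 := by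
    rw [hAsum]
    exact pyth_aux _ (fun i j hij => horth i j hij _ (hAf i) _ (hAf j))
  have hterm : ∀ i, ‖A (f i)‖ ^ 2 ≤ c ^ 2 * ‖f i‖ ^ 2 := by
    intro i
    by_cases hz : f i = 0
    · simp [hz]
    · have hp : p i := by by_contra h; exact hz (hfz i h)
      have := hc i hp (f i) (hfE i) hz
      nlinarith [norm_nonneg (A (f i)), norm_nonneg (f i)]
  have hsq : ‖A (∑ i, f i)‖ ^ 2 ≤ c ^ 2 * ‖∑ i, f i‖ ^ 2 := by
    rw [h1, h2, Finset.mul_sum]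
    exact Finset.sum_le_sum fun i _ => hterm i
  nlinarith [norm_nonneg (A (∑ i, f i)), norm_nonneg (∑ i, f i),
    mul_nonneg hc0 (norm_nonneg (∑ i, f i))]

lemma norm_lower_aux {d k : ℕ} (E : Fin k → Submodule ℝ (Euc d))
    (horth : ∀ i j : Fin k, i ≠ j → ∀ v ∈ E i, ∀ w ∈ E j, (inner ℝ v w : ℝ) = 0)
    (A : Euc d ≃L[ℝ] Euc d)
    (hApres : ∀ i : Fin k, ⇑A '' (E i : Set (Euc d)) = (E i : Set (Euc d)))
    (p : Fin k → Prop) [DecidablePred p] (c : ℝ) (hc0 : 0 ≤ c)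
    (hc : ∀ i, p i → ∀ w ∈ E i, w ≠ 0 → c * ‖w‖ ≤ ‖A w‖)
    {v : Euc d} (hv : v ∈ ⨆ i, ⨆ (_ : p i), E i) : c * ‖v‖ ≤ ‖A v‖ := by
  obtain ⟨f, hfE, hfz, rfl⟩ := decomp_aux E p hv
  have hAf : ∀ i, A (f i) ∈ E i := fun i => by
    have : A (f i) ∈ ⇑A '' (E i : Set (Euc d)) := ⟨f i, hfE i, rfl⟩
    rwa [hApres i] at this
  have h1 : ‖∑ i, f i‖ ^ 2 = ∑ i, ‖f i‖ ^ 2 :=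
    pyth_aux f (fun i j hij => horth i j hij _ (hfE i) _ (hfE j))
  have hAsum : A (∑ i, f i) = ∑ i, A (f i) := map_sum A f Finset.univ
  have h2 : ‖A (∑ i, f i)‖ ^ 2 = ∑ i, ‖A (f i)‖ ^ 2 := by
    rw [hAsum]
    exact pyth_aux _ (fun i j hij => horth i j hij _ (hAf i) _ (hAf j))
  have hterm : ∀ i, c ^ 2 * ‖f i‖ ^ 2 ≤ ‖A (f i)‖ ^ 2 := by
    intro i
    by_cases hz : f i = 0
    · simp [hz]
    · have hp : p i := by by_contra h; exact hz (hfz i h)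
      have := hc i hp (f i) (hfE i) hz
      nlinarith [norm_nonneg (A (f i)), norm_nonneg (f i), mul_nonneg hc0 (norm_nonneg (f i))]
  have hsq : c ^ 2 * ‖∑ i, f i‖ ^ 2 ≤ ‖A (∑ i, f i)‖ ^ 2 := by
    rw [h1, h2, Finset.mul_sum]
    exact Finset.sum_le_sum fun i _ => hterm i
  nlinarith [norm_nonneg (A (∑ i, f i)), norm_nonneg (∑ i, f i),
    mul_nonneg hc0 (norm_nonneg (∑ i, f i))]

set_option maxHeartbeats 1000000 in
theorem dual_cone_contraction {d k : ℕ} (E : Fin k → Submodule ℝ (Euc d))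
    (horth : ∀ i j : Fin k, i ≠ j → ∀ v ∈ E i, ∀ w ∈ E j, (inner ℝ v w : ℝ) = 0)
    (hspan : (⨆ i, E i) = ⊤)
    (lam : Fin k → ℝ) (hlam : StrictAnti lam) (κ δ : ℝ)
    (hκ : IsLeast {x : ℝ | ∃ i j : Fin k, (j : ℕ) = (i : ℕ) + 1 ∧ x = (lam i - lam j) / 2} κ)
    (hδ : 0 < δ) (hδκ : δ < κ / 2)
    (A : Euc d ≃L[ℝ] Euc d)
    (hApres : ∀ i : Fin k, ⇑A '' (E i : Set (Euc d)) = (E i : Set (Euc d)))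
    (hAnorm : ∀ i : Fin k, ∀ v ∈ E i, v ≠ 0 →
      Real.exp (lam i - δ / 4) * ‖v‖ < ‖A v‖ ∧ ‖A v‖ < Real.exp (lam i + δ / 4) * ‖v‖) :
    ∀ j : ℕ, 1 ≤ j → j ≤ k - 1 → ∀ γ : ℝ, 0 < γ →
      ⇑A.symm '' coneL E j γ ⊆ coneL E j (γ * Real.exp (-κ + δ / 4)) := by
  classical
  intro j hj1 hjk γ hγ x hx
  obtain ⟨y, hy, rfl⟩ := hx
  have hk2 : 2 ≤ k := by omega
  set a : Fin k := ⟨j - 1, by omega⟩ with ha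
  set b : Fin k := ⟨j, by omega⟩ with hb
  have hκab : κ ≤ (lam a - lam b) / 2 := hκ.2 ⟨a, b, by simp [ha, hb]; omega, rfl⟩
  have hκpos : 0 < κ := by linarith
  set V : Submodule ℝ (Euc d) := Vlow E j with hV
  set Vh : Submodule ℝ (Euc d) := ⨆ (i : Fin k), ⨆ (_ : ¬ ((i : ℕ) < j)), E i with hVh
  -- V ⟂ Vh
  have hVV : V ⟂ Vh := by
    rw [hV, hVh]
    refine Submodule.isOrtho_iSup_left.mpr fun i => Submodule.isOrtho_iSup_left.mpr fun hi =>
      Submodule.isOrtho_iSup_right.mpr fun i' => Submodule.isOrtho_iSup_right.mpr fun hi' => ?_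
    intro u hu
    rw [Submodule.mem_orthogonal']
    intro v hv
    exact horth i i' (by intro h; exact hi' (h ▸ hi)) u hu v hv
  -- V ⊔ Vh = ⊤
  have hsup : V ⊔ Vh = ⊤ := by
    rw [eq_top_iff, ← hspan]
    refine iSup_le fun i => ?_
    by_cases h : (i : ℕ) < j
    · exact le_sup_of_le_left (le_iSup_of_le i (le_iSup (fun _ : (i : ℕ) < j => E i) h))
    · exact le_sup_of_le_right (le_iSup_of_le i (le_iSup (fun _ : ¬ (i : ℕ) < j => E i) h))
  have hcompl : Vᗮ = Vh := by
    have h1 : Vh ≤ Vᗮ := Submodule.isOrtho_iff_le.mp hVV.symm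
    calc Vᗮ = (Vh ⊔ V) ⊓ Vᗮ := by rw [sup_comm, hsup, top_inf_eq]
    _ = Vh ⊔ (V ⊓ Vᗮ) := sup_inf_assoc_of_le _ h1
    _ = Vh := by rw [Submodule.inf_orthogonal_eq_bot, sup_bot_eq]
  -- A maps E i into E i
  have hAE : ∀ i : Fin k, ∀ v ∈ E i, A v ∈ E i := fun i v hv => by
    have : A v ∈ ⇑A '' (E i : Set (Euc d)) := ⟨v, hv, rfl⟩
    rwa [hApres i] at this
  -- A preserves V and Vh
  have hAV : ∀ v ∈ V, A v ∈ V := by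
    intro v hv
    obtain ⟨f, hfE, hfz, rfl⟩ := decomp_aux E (fun i => (i : ℕ) < j) hv
    rw [map_sum]
    refine Submodule.sum_mem _ fun i _ => ?_
    by_cases h : (i : ℕ) < j
    · exact Submodule.mem_iSup_of_mem i (Submodule.mem_iSup_of_mem h (hAE i _ (hfE i)))
    · rw [hfz i h, map_zero]; exact Submodule.zero_mem _
  have hAVh : ∀ v ∈ Vh, A v ∈ Vh := by
    intro v hv
    obtain ⟨f, hfE, hfz, rfl⟩ := decomp_aux E (fun i => ¬ ((i : ℕ) < j)) hv
    rw [map_sum]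
    refine Submodule.sum_mem _ fun i _ => ?_
    by_cases h : ¬ ((i : ℕ) < j)
    · exact Submodule.mem_iSup_of_mem i (Submodule.mem_iSup_of_mem h (hAE i _ (hfE i)))
    · rw [hfz i h, map_zero]; exact Submodule.zero_mem _
  -- decompose w := A.symm y
  set w : Euc d := A.symm y with hw
  have hAw : A w = y := A.apply_symm_apply y
  set u : Euc d := projS V w with hu
  set u' : Euc d := w - u with hu'
  have huV : u ∈ V := by
    rw [hu]; exact Submodule.coe_mem _
  have hu'o : u' ∈ Vᗮ := by
    rw [hu', hu]
    exact V.sub_starProjection_mem_orthogonal w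
  have hu'h : u' ∈ Vh := hcompl ▸ hu'o
  have hAuV : A u ∈ V := hAV u huV
  have hAu'o : A u' ∈ Vᗮ := hcompl ▸ hAVh u' hu'h
  -- projection of A w
  have hproj : projS V (A w) = A u := by
    have hsplit : A w = A u + A u' := by
      rw [hu', map_sub]; abel
    have h1 : (V.orthogonalProjection (A u) : Euc d) = A u :=
      V.starProjection_eq_self_iff.mpr hAuV
    have h2 : V.orthogonalProjection (A u') = 0 :=
      Submodule.orthogonalProjectionOnto_apply_of_mem_orthogonal hAu'o
    show (V.orthogonalProjection (A w) : Euc d) = A u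
    rw [hsplit, map_add, h2, add_zero, h1]
  -- the hypothesis
  have hy' : ‖A u‖ < γ * ‖A u'‖ := by
    have := hy
    rw [coneL, Set.mem_setOf_eq, ← hV] at this
    rw [← hAw, hproj] at this
    have hAu' : A w - A u = A u' := by rw [hu', map_sub]
    rwa [hAu'] at this
  -- norm bounds
  have hlow : Real.exp (lam a - δ / 4) * ‖u‖ ≤ ‖A u‖ := by
    refine norm_lower_aux E horth A hApres (fun i => (i : ℕ) < j) _ (Real.exp_nonneg _)
      (fun i hi v hv hvz => ?_) huV
    have hle : lam a ≤ lam i := hlam.antitone (by rw [Fin.le_def]; simp [ha]; omega)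
    have := (hAnorm i v hv hvz).1
    have hexp : Real.exp (lam a - δ / 4) ≤ Real.exp (lam i - δ / 4) :=
      Real.exp_le_exp.mpr (by linarith)
    nlinarith [norm_nonneg v]
  have hhigh : ‖A u'‖ ≤ Real.exp (lam b + δ / 4) * ‖u'‖ := by
    refine norm_upper_aux E horth A hApres (fun i => ¬ ((i : ℕ) < j)) _ (Real.exp_nonneg _)
      (fun i hi v hv hvz => ?_) hu'h
    have hle : lam i ≤ lam b := hlam.antitone (by rw [Fin.le_def]; simp [hb]; omega)
    have := (hAnorm i v hv hvz).2
    have hexp : Real.exp (lam i + δ / 4) ≤ Real.exp (lam b + δ / 4) :=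
      Real.exp_le_exp.mpr (by linarith)
    nlinarith [norm_nonneg v]
  -- conclude
  show ‖projS (Vlow E j) w‖ < γ * Real.exp (-κ + δ / 4) * ‖w - projS (Vlow E j) w‖
  rw [← hV, ← hu, ← hu']
  have hexpkey : Real.exp (lam b + δ / 4) ≤ Real.exp (-κ + δ / 4) * Real.exp (lam a - δ / 4) := by
    rw [← Real.exp_add]
    exact Real.exp_le_exp.mpr (by linarith)
  have hchain : Real.exp (lam a - δ / 4) * ‖u‖ <
      γ * (Real.exp (-κ + δ / 4) * Real.exp (lam a - δ / 4)) * ‖u'‖ := by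
    calc Real.exp (lam a - δ / 4) * ‖u‖ ≤ ‖A u‖ := hlow
    _ < γ * ‖A u'‖ := hy'
    _ ≤ γ * (Real.exp (lam b + δ / 4) * ‖u'‖) := by
        exact mul_le_mul_of_nonneg_left hhigh hγ.le
    _ ≤ γ * (Real.exp (-κ + δ / 4) * Real.exp (lam a - δ / 4)) * ‖u'‖ := by
        have := mul_le_mul_of_nonneg_right hexpkey (norm_nonneg u')
        nlinarith
  nlinarith [Real.exp_pos (lam a - δ / 4)]
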